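/- Let n ≥ 1 be an integer, C₁, C₂ ∈ ℝ, σ² > 0, and define b : {θ ∈ ℝⁿ : θ ≠ 0, C₁‖θ‖₂ + C₂‖θ‖₂^{−1} ≠ 0} → ℝⁿ by b(θ) = σ²·[2 − n + 2(C₁‖θ‖₂ − C₂‖θ‖₂^{−1})/(C₁‖θ‖₂ + C₂‖θ‖₂^{−1})]·θ/‖θ‖₂². Then for every θ₀ ≠ 0 with C₁‖θ₀‖₂ + C₂‖θ₀‖₂^{−1} ≠ 0, the function b is differentiable at θ₀ and ‖b(θ₀)‖₂² + 2σ²·Tr(Db(θ₀)) = (4n − n²)(σ²)²/‖θ₀‖₂², where Db(θ₀) is the Jacobian matrix of b at θ₀ and Tr denotes the trace. -/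

import Mathlib

/-- The bias correction term
b(θ) = σ²[2 − n + 2(C₁‖θ‖ − C₂‖θ‖⁻¹)/(C₁‖θ‖ + C₂‖θ‖⁻¹)]·θ/‖θ‖². -/
noncomputable def bFun (n : ℕ) (C₁ C₂ σ2 : ℝ) (θ : EuclideanSpace ℝ (Fin n)) :
    EuclideanSpace ℝ (Fin n) :=
  (σ2 * (2 - (n : ℝ)
      + 2 * (C₁ * ‖θ‖ - C₂ * ‖θ‖⁻¹) / (C₁ * ‖θ‖ + C₂ * ‖θ‖⁻¹)) / ‖θ‖ ^ 2) • θ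

/-- The trace of the Jacobian of a map `ℝⁿ → ℝⁿ` at a point. -/
noncomputable def jacobianTrace {n : ℕ}
    (b : EuclideanSpace ℝ (Fin n) → EuclideanSpace ℝ (Fin n))
    (θ : EuclideanSpace ℝ (Fin n)) : ℝ :=
  ∑ i : Fin n, fderiv ℝ b θ (EuclideanSpace.single i 1) i

theorem stmt2 (n : ℕ) (hn : 1 ≤ n) (C₁ C₂ σ2 : ℝ) (hσ2 : 0 < σ2)
    (θ₀ : EuclideanSpace ℝ (Fin n)) (hθ₀ : θ₀ ≠ 0)
    (hC : C₁ * ‖θ₀‖ + C₂ * ‖θ₀‖⁻¹ ≠ 0) :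
    DifferentiableAt ℝ (bFun n C₁ C₂ σ2) θ₀ ∧
    ‖bFun n C₁ C₂ σ2 θ₀‖ ^ 2 + 2 * σ2 * jacobianTrace (bFun n C₁ C₂ σ2) θ₀
      = (4 * n - n ^ 2) * σ2 ^ 2 / ‖θ₀‖ ^ 2 := by
  -- rewrite bFun as a function of ‖θ‖²
  have hb : bFun n C₁ C₂ σ2 = fun θ =>
      (σ2 * (2 - (n:ℝ) + 2*(C₁*‖θ‖^2 - C₂)/(C₁*‖θ‖^2 + C₂)) / ‖θ‖^2) • θ := by
    funext θ
    by_cases hθ : θ = 0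
    · subst hθ; simp [bFun]
    · have h0 : ‖θ‖ ≠ 0 := norm_ne_zero_iff.mpr hθ
      have hnum : C₁ * ‖θ‖ - C₂ * ‖θ‖⁻¹ = (C₁*‖θ‖^2 - C₂)/‖θ‖ := by field_simp
      have hden : C₁ * ‖θ‖ + C₂ * ‖θ‖⁻¹ = (C₁*‖θ‖^2 + C₂)/‖θ‖ := by field_simp
      have key : 2 * (C₁ * ‖θ‖ - C₂ * ‖θ‖⁻¹) / (C₁ * ‖θ‖ + C₂ * ‖θ‖⁻¹)
          = 2*(C₁*‖θ‖^2 - C₂)/(C₁*‖θ‖^2 + C₂) := by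
        by_cases hD : C₁*‖θ‖^2 + C₂ = 0
        · rw [hden, hD, zero_div, div_zero, div_zero]
        · rw [hnum, hden]; field_simp
      unfold bFun
      rw [key]
  have hr : ‖θ₀‖ ≠ 0 := norm_ne_zero_iff.mpr hθ₀
  have hs₀ : ‖θ₀‖^2 ≠ 0 := pow_ne_zero 2 hr
  have hv : C₁ * ‖θ₀‖^2 + C₂ ≠ 0 := by
    intro h
    apply hC
    have : C₁ * ‖θ₀‖ + C₂ * ‖θ₀‖⁻¹ = (C₁ * ‖θ₀‖^2 + C₂) / ‖θ₀‖ := by field_simp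
    rw [this, h, zero_div]
  -- the scalar function φ and its derivative at s₀ = ‖θ₀‖²
  have h1 : HasDerivAt (fun s : ℝ => 2*(C₁*s - C₂)) (2*C₁) (‖θ₀‖^2) := by
    simpa using (((hasDerivAt_id (‖θ₀‖^2)).const_mul C₁).sub_const C₂).const_mul 2
  have h2 : HasDerivAt (fun s : ℝ => C₁*s + C₂) C₁ (‖θ₀‖^2) := by
    simpa using ((hasDerivAt_id (‖θ₀‖^2)).const_mul C₁).add_const C₂
  have h3 := h1.div h2 hv
  have h4 := ((h3.const_add (2 - (n:ℝ))).const_mul σ2).div (hasDerivAt_id (‖θ₀‖^2)) hs₀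
  set d : ℝ := (σ2 * ((2 * C₁ * (C₁ * ‖θ₀‖ ^ 2 + C₂) - 2 * (C₁ * ‖θ₀‖ ^ 2 - C₂) * C₁) /
      (C₁ * ‖θ₀‖ ^ 2 + C₂) ^ 2) * ‖θ₀‖ ^ 2 -
      σ2 * (2 - (n:ℝ) + 2 * (C₁ * ‖θ₀‖ ^ 2 - C₂) / (C₁ * ‖θ₀‖ ^ 2 + C₂)) * 1) / (‖θ₀‖ ^ 2) ^ 2
    with hd
  set c : ℝ := σ2 * (2 - (n:ℝ) + 2*(C₁*‖θ₀‖^2 - C₂)/(C₁*‖θ₀‖^2 + C₂)) / ‖θ₀‖^2 with hcdef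
  have hφ : HasDerivAt
      (fun s : ℝ => σ2 * (2 - (n:ℝ) + 2*(C₁*s - C₂)/(C₁*s + C₂)) / s) d (‖θ₀‖^2) := by
    convert h4 using 2 <;> rfl
  -- fderiv of θ ↦ ‖θ‖²
  have hq : HasFDerivAt (fun θ : EuclideanSpace ℝ (Fin n) => ‖θ‖^2)
      (2 • (innerSL ℝ θ₀)) θ₀ := (hasStrictFDerivAt_norm_sq θ₀).hasFDerivAt
  have hg : HasFDerivAt
      (fun θ : EuclideanSpace ℝ (Fin n) =>
        σ2 * (2 - (n:ℝ) + 2*(C₁*‖θ‖^2 - C₂)/(C₁*‖θ‖^2 + C₂)) / ‖θ‖^2)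
      (d • (2 • (innerSL ℝ θ₀))) θ₀ := by have := hφ.comp_hasFDerivAt θ₀ hq; exact this
  set L : EuclideanSpace ℝ (Fin n) →L[ℝ] EuclideanSpace ℝ (Fin n) :=
    c • ContinuousLinearMap.id ℝ (EuclideanSpace ℝ (Fin n))
      + (d • (2 • (innerSL ℝ θ₀))).smulRight θ₀ with hL
  have hF : HasFDerivAt (bFun n C₁ C₂ σ2) L θ₀ := by
    rw [hb, hL]
    exact hg.smul (hasFDerivAt_id θ₀)
  refine ⟨hF.differentiableAt, ?_⟩
  -- trace computation
  have hsum : ∑ i : Fin n, θ₀ i * θ₀ i = ‖θ₀‖^2 := by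
    rw [← real_inner_self_eq_norm_sq]
    simp [PiLp.inner_apply, RCLike.inner_apply, mul_comm]
    rw [EuclideanSpace.real_norm_sq_eq]; simp [sq]
  have htr : jacobianTrace (bFun n C₁ C₂ σ2) θ₀ = n * c + 2 * d * ‖θ₀‖^2 := by
    unfold jacobianTrace
    rw [hF.fderiv]
    have happ : ∀ i : Fin n, (L (EuclideanSpace.single i 1)) i
        = c + d * (2 * (θ₀ i)) * θ₀ i := by
      intro i
      rw [hL]
      simp [ContinuousLinearMap.smul_apply, ContinuousLinearMap.smulRight_apply,
        real_inner_comm, EuclideanSpace.inner_single_right, EuclideanSpace.single_apply,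
        PiLp.add_apply, PiLp.smul_apply, smul_eq_mul]
    rw [Finset.sum_congr rfl fun i _ => happ i]
    rw [Finset.sum_add_distrib, Finset.sum_const, Finset.card_univ, Fintype.card_fin]
    have : ∑ i : Fin n, d * (2 * θ₀ i) * θ₀ i = 2 * d * ∑ i : Fin n, θ₀ i * θ₀ i := by
      rw [Finset.mul_sum]; exact Finset.sum_congr rfl fun i _ => by ring
    rw [this, hsum]
    push_cast
    ring
  have hnorm : ‖bFun n C₁ C₂ σ2 θ₀‖^2 = c^2 * ‖θ₀‖^2 := by
    rw [hb]
    simp only [← hcdef]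
    rw [norm_smul, mul_pow, Real.norm_eq_abs, sq_abs]
  rw [htr, hnorm, hcdef, hd]
  field_simp
  ring
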